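/- Let X_1, …, X_6 be i.i.d. integrable real random variables on a probability space. Define the job compute times of the three batching schemes: T¹ = min( max(X_3, X_5), max(X_2, max(X_4, X_6)) ) (cyclic overlapping), T² = min( max(X_3, min(X_5, X_6)), max(max(X_2, X_4), min(X_5, X_6)) ) (mixed overlapping/non-overlapping), and T³ = max( min(X_3, X_4), min(X_5, X_6) ) (non-overlapping). Then E[T³] ≤ E[T²] ≤ E[T¹]. In particular, regardless of the service-time distribution, the balanced assignment of non-overlapping batches achieves average job compute time no larger than that of the overlapping batching schemes. -/

import Mathlib

open MeasureTheory ProbabilityTheory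

private lemma int_max {Ω : Type*} [MeasureSpace Ω] {f g : Ω → ℝ}
    (hf : Integrable f ℙ) (hg : Integrable g ℙ) :
    Integrable (fun ω => max (f ω) (g ω)) ℙ := hf.sup hg

private lemma int_min {Ω : Type*} [MeasureSpace Ω] {f g : Ω → ℝ}
    (hf : Integrable f ℙ) (hg : Integrable g ℙ) :
    Integrable (fun ω => min (f ω) (g ω)) ℙ := hf.inf hg

/-- For i.i.d. integrable batch service times `X 0, …, X 5` (representing `X_1, …, X_6`),
the expected job compute times of the three batching schemes satisfy
`E[T³] ≤ E[T²] ≤ E[T¹]`, where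
`T¹ = min(max(X_3, X_5), max(X_2, max(X_4, X_6)))` (cyclic overlapping),
`T² = min(max(X_3, min(X_5, X_6)), max(max(X_2, X_4), min(X_5, X_6)))` (mixed), and
`T³ = max(min(X_3, X_4), min(X_5, X_6))` (non-overlapping). -/
theorem nonoverlapping_beats_overlapping
    {Ω : Type*} [MeasureSpace Ω] [IsProbabilityMeasure (ℙ : Measure Ω)]
    (X : Fin 6 → Ω → ℝ)
    (hmeas : ∀ i, Measurable (X i))
    (hint : ∀ i, Integrable (X i) ℙ)
    (hindep : iIndepFun X ℙ)
    (hident : ∀ i j, IdentDistrib (X i) (X j) ℙ ℙ) :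
    (∫ ω, max (min (X 2 ω) (X 3 ω)) (min (X 4 ω) (X 5 ω))) ≤
      (∫ ω, min (max (X 2 ω) (min (X 4 ω) (X 5 ω)))
                (max (max (X 1 ω) (X 3 ω)) (min (X 4 ω) (X 5 ω)))) ∧
    (∫ ω, min (max (X 2 ω) (min (X 4 ω) (X 5 ω)))
              (max (max (X 1 ω) (X 3 ω)) (min (X 4 ω) (X 5 ω)))) ≤
      (∫ ω, min (max (X 2 ω) (X 4 ω)) (max (X 1 ω) (max (X 3 ω) (X 5 ω)))) := by
  have I2 : Integrable (fun ω => min (max (X 2 ω) (min (X 4 ω) (X 5 ω)))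
      (max (max (X 1 ω) (X 3 ω)) (min (X 4 ω) (X 5 ω)))) ℙ :=
    int_min (int_max (hint 2) (int_min (hint 4) (hint 5)))
      (int_max (int_max (hint 1) (hint 3)) (int_min (hint 4) (hint 5)))
  constructor
  · refine integral_mono (int_max (int_min (hint 2) (hint 3)) (int_min (hint 4) (hint 5))) I2 ?_
    intro ω
    have h : min (max (X 2 ω) (min (X 4 ω) (X 5 ω)))
        (max (max (X 1 ω) (X 3 ω)) (min (X 4 ω) (X 5 ω)))
        = max (min (X 2 ω) (max (X 1 ω) (X 3 ω))) (min (X 4 ω) (X 5 ω)) :=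
      (max_min_distrib_right _ _ _).symm
    simp only [h]
    exact max_le_max (min_le_min le_rfl (le_max_right _ _)) le_rfl
  · refine integral_mono I2 (int_min (int_max (hint 2) (hint 4)) (int_max (hint 1) (int_max (hint 3) (hint 5)))) ?_
    intro ω
    refine min_le_min (max_le_max le_rfl (min_le_left _ _)) ?_
    refine max_le (max_le ?_ ?_) ?_
    · exact le_max_left _ _
    · exact le_trans (le_max_left _ _) (le_max_right _ _)
    · exact le_trans (le_trans (min_le_right _ _) (le_max_right _ _)) (le_max_right _ _)
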